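/- For all τ in the complex upper half-plane ℍ: ∑_{n∈ℤ} (−1)ⁿ e^{πiτn²} = η(τ/2)² / η(τ). -/

import Mathlib

namespace ThetaEtaAux

open Complex Finset Filter Topology

/-! ### Generic infinite product lemmas -/

lemma one_sub_ne (c x : ℂ) (hx : ‖x‖ < 1) (hc : ‖c‖ < 1) (n : ℕ) :
    1 - c * x ^ n ≠ 0 := by
  have hlt : ‖c * x ^ n‖ < 1 := by
    calc ‖c * x ^ n‖ = ‖c‖ * ‖x‖ ^ n := by simp [norm_mul, norm_pow]
      _ ≤ ‖c‖ * 1 := mul_le_mul_of_nonneg_left (pow_le_one₀ (norm_nonneg x) hx.le)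
          (norm_nonneg c)
      _ < 1 := by simpa using hc
  intro h
  rw [sub_eq_zero] at h
  rw [← h] at hlt; simp at hlt

lemma summable_log (c x : ℂ) (hx : ‖x‖ < 1) (hc : ‖c‖ < 1) :
    Summable (fun n : ℕ => Complex.log (1 - c * x ^ n)) := by
  apply Summable.of_norm_bounded
    (g := fun n => ((‖c‖ * (1 - ‖c‖)⁻¹ / 2 + 1) * ‖c‖) * ‖x‖ ^ n)
    ((summable_geometric_of_lt_one (norm_nonneg x) hx).mul_left _)
  intro n
  have hb : ‖-(c * x ^ n)‖ ≤ ‖c‖ * ‖x‖ ^ n := by simp [norm_mul, norm_pow]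
  have hb1 : ‖c‖ * ‖x‖ ^ n ≤ ‖c‖ := by
    calc ‖c‖ * ‖x‖ ^ n ≤ ‖c‖ * 1 :=
      mul_le_mul_of_nonneg_left (pow_le_one₀ (norm_nonneg x) hx.le) (norm_nonneg c)
    _ = ‖c‖ := mul_one _
  have hlt : ‖-(c * x ^ n)‖ < 1 := lt_of_le_of_lt (hb.trans hb1) hc
  have h5 := Complex.norm_log_one_add_le hlt
  rw [show (1 : ℂ) + -(c * x ^ n) = 1 - c * x ^ n by ring] at h5
  refine h5.trans ?_
  have h0 : (0:ℝ) ≤ ‖x‖ ^ n := by positivity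
  have h1 : ‖-(c * x ^ n)‖ ≤ ‖c‖ := hb.trans hb1
  have h2 : (1 - ‖-(c * x ^ n)‖)⁻¹ ≤ (1 - ‖c‖)⁻¹ := by
    apply inv_anti₀ (by linarith) (by linarith)
  have h3 : ‖-(c * x ^ n)‖ ^ 2 * (1 - ‖-(c * x ^ n)‖)⁻¹ / 2 ≤
      (‖c‖ * ‖x‖ ^ n) * (‖c‖ * (1 - ‖c‖)⁻¹) / 2 := by
    have h6 : ‖-(c * x ^ n)‖ ^ 2 ≤ (‖c‖ * ‖x‖ ^ n) * ‖c‖ := by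
      nlinarith [norm_nonneg (-(c * x ^ n))]
    have h4 : (0:ℝ) ≤ (1 - ‖c‖)⁻¹ := by rw [inv_nonneg]; linarith
    nlinarith [norm_nonneg (-(c * x ^ n)), h2, h6,
      mul_nonneg (mul_nonneg (norm_nonneg c) h0) (norm_nonneg c)]
  nlinarith [hb, h3, norm_nonneg c, h0]

lemma multipliable_one_sub (c x : ℂ) (hx : ‖x‖ < 1) (hc : ‖c‖ < 1) :
    Multipliable (fun n : ℕ => 1 - c * x ^ n) :=
  Complex.multipliable_of_summable_log (summable_log c x hx hc)

lemma tprod_one_sub_ne (c x : ℂ) (hx : ‖x‖ < 1) (hc : ‖c‖ < 1) :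
    (∏' n : ℕ, (1 - c * x ^ n)) ≠ 0 := by
  have h2 := Complex.cexp_tsum_eq_tprod (f := fun n => 1 - c * x ^ n)
    (fun n => one_sub_ne c x hx hc n) (summable_log c x hx hc)
  rw [← h2]
  exact Complex.exp_ne_zero _

/-! ### Partial products and bounds -/

/-- partial product `∏_{j<k} (1 - x^{j+1})` -/
noncomputable def Pp (x : ℂ) (k : ℕ) : ℂ := ∏ j ∈ Finset.range k, (1 - x ^ (j + 1))

lemma Pp_factor_ne (x : ℂ) (hx : ‖x‖ < 1) (j : ℕ) : 1 - x ^ (j + 1) ≠ 0 := by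
  have := one_sub_ne x x hx hx j
  rwa [← pow_succ'] at this

lemma Pp_ne_zero (x : ℂ) (hx : ‖x‖ < 1) (k : ℕ) : Pp x k ≠ 0 :=
  Finset.prod_ne_zero_iff.2 fun j _ => Pp_factor_ne x hx j

lemma geom_partial_le (r : ℝ) (h0 : 0 ≤ r) (h1 : r < 1) (k : ℕ) :
    ∑ j ∈ Finset.range k, r ^ (j + 1) ≤ (1 - r)⁻¹ := by
  have hs : Summable (fun j : ℕ => r ^ j) := summable_geometric_of_lt_one h0 h1
  calc ∑ j ∈ Finset.range k, r ^ (j + 1) ≤ ∑ j ∈ Finset.range k, r ^ j := by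
        apply Finset.sum_le_sum
        intro i _
        exact pow_le_pow_of_le_one h0 h1.le (Nat.le_succ i)
    _ ≤ ∑' j : ℕ, r ^ j := Summable.sum_le_tsum _ (fun i _ => pow_nonneg h0 i) hs
    _ = (1 - r)⁻¹ := tsum_geometric_of_lt_one h0 h1

lemma Pp_norm_le (x : ℂ) (hx : ‖x‖ < 1) (k : ℕ) :
    ‖Pp x k‖ ≤ Real.exp ((1 - ‖x‖)⁻¹) := by
  rw [Pp, norm_prod]
  calc ∏ j ∈ Finset.range k, ‖1 - x ^ (j + 1)‖
      ≤ ∏ j ∈ Finset.range k, Real.exp (‖x‖ ^ (j + 1)) := by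
        apply Finset.prod_le_prod (fun i _ => norm_nonneg _)
        intro i _
        calc ‖1 - x ^ (i + 1)‖ ≤ ‖(1:ℂ)‖ + ‖x ^ (i + 1)‖ := norm_sub_le _ _
          _ = 1 + ‖x‖ ^ (i + 1) := by simp [norm_pow]
          _ ≤ Real.exp (‖x‖ ^ (i + 1)) := by
              have := Real.add_one_le_exp (‖x‖ ^ (i + 1)); linarith
    _ = Real.exp (∑ j ∈ Finset.range k, ‖x‖ ^ (j + 1)) := (Real.exp_sum _ _).symm
    _ ≤ Real.exp ((1 - ‖x‖)⁻¹) :=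
        Real.exp_le_exp.2 (geom_partial_le _ (norm_nonneg x) hx k)

lemma exp_neg_le_one_sub {r t : ℝ} (h0 : 0 ≤ t) (htr : t ≤ r) (h1 : r < 1) :
    Real.exp (-(t * (1 - r)⁻¹)) ≤ 1 - t := by
  have hr0 : (0:ℝ) < 1 - r := by linarith
  have hinv : (0:ℝ) < (1 - r)⁻¹ := by positivity
  have key : Real.exp (-(t * (1 - r)⁻¹)) ≤ (1 + t * (1 - r)⁻¹)⁻¹ := by
    rw [Real.exp_neg]
    apply inv_anti₀ (by positivity)
    have := Real.add_one_le_exp (t * (1 - r)⁻¹)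
    linarith
  refine key.trans ?_
  rw [inv_le_iff_one_le_mul₀ (by positivity)]
  have hmul : (1 - r) * (1 - r)⁻¹ = 1 := mul_inv_cancel₀ (by linarith)
  nlinarith [mul_nonneg h0 hinv.le, mul_le_mul_of_nonneg_left (sub_le_sub_left htr 1) (mul_pos (lt_of_lt_of_le (by linarith : (0:ℝ) < 1 - r) (le_refl _)) hinv).le]

lemma Pp_norm_ge (x : ℂ) (hx : ‖x‖ < 1) (k : ℕ) :
    Real.exp (-((1 - ‖x‖)⁻¹ * (1 - ‖x‖)⁻¹)) ≤ ‖Pp x k‖ := by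
  rw [Pp, norm_prod]
  have h1 : ∀ j ∈ Finset.range k,
      Real.exp (-(‖x‖ ^ (j + 1) * (1 - ‖x‖)⁻¹)) ≤ ‖1 - x ^ (j + 1)‖ := by
    intro j _
    have hle : ‖x‖ ^ (j + 1) ≤ ‖x‖ := pow_le_of_le_one (norm_nonneg x) hx.le (Nat.succ_ne_zero j)
    calc Real.exp (-(‖x‖ ^ (j + 1) * (1 - ‖x‖)⁻¹)) ≤ 1 - ‖x‖ ^ (j + 1) :=
        exp_neg_le_one_sub (by positivity) hle hx
      _ = ‖(1:ℂ)‖ - ‖x ^ (j + 1)‖ := by simp [norm_pow]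
      _ ≤ ‖1 - x ^ (j + 1)‖ := norm_sub_norm_le _ _
  calc Real.exp (-((1 - ‖x‖)⁻¹ * (1 - ‖x‖)⁻¹))
      ≤ Real.exp (-((∑ j ∈ Finset.range k, ‖x‖ ^ (j + 1)) * (1 - ‖x‖)⁻¹)) := by
        apply Real.exp_le_exp.2
        rw [neg_le_neg_iff]
        apply mul_le_mul_of_nonneg_right (geom_partial_le _ (norm_nonneg x) hx k)
        rw [inv_nonneg]; linarith [hx]
    _ = ∏ j ∈ Finset.range k, Real.exp (-(‖x‖ ^ (j + 1) * (1 - ‖x‖)⁻¹)) := by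
        rw [← Real.exp_sum]
        congr 1
        rw [Finset.sum_mul, ← Finset.sum_neg_distrib]
    _ ≤ ∏ j ∈ Finset.range k, ‖1 - x ^ (j + 1)‖ :=
        Finset.prod_le_prod (fun i _ => (Real.exp_pos _).le) h1


/-! ### Gaussian binomials, division form -/

noncomputable def Gz (x : ℂ) (m : ℕ) (k : ℤ) : ℂ :=
  if 0 ≤ k ∧ k ≤ m then Pp x m / (Pp x k.toNat * Pp x (m - k.toNat)) else 0

variable {x : ℂ}

lemma Gz_of_neg (m : ℕ) {k : ℤ} (h : k < 0) : Gz x m k = 0 := by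
  rw [Gz, if_neg]; omega

lemma Gz_of_gt (m : ℕ) {k : ℤ} (h : (m : ℤ) < k) : Gz x m k = 0 := by
  rw [Gz, if_neg]; omega

lemma Gz_zero (hx : ‖x‖ < 1) (m : ℕ) : Gz x m 0 = 1 := by
  rw [Gz, if_pos (by omega)]
  rw [show ((0:ℤ).toNat) = 0 from rfl, show Pp x 0 = 1 from by simp [Pp], one_mul,
    Nat.sub_zero, div_self (Pp_ne_zero x hx m)]

lemma Gz_self (hx : ‖x‖ < 1) (m : ℕ) : Gz x m m = 1 := by
  rw [Gz, if_pos (by omega)]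
  simp [Int.toNat_natCast]
  rw [show (Pp x 0) = 1 by simp [Pp]]
  rw [mul_one, div_self (Pp_ne_zero x hx m)]

lemma Pp_succ (x : ℂ) (n : ℕ) : Pp x (n + 1) = Pp x n * (1 - x ^ (n + 1)) := by
  rw [Pp, Finset.prod_range_succ]; rfl

lemma Gz_eq (hx : ‖x‖ < 1) {m a : ℕ} (h : a ≤ m) :
    Gz x m (a : ℤ) = Pp x m / (Pp x a * Pp x (m - a)) := by
  rw [Gz, if_pos (by omega)]
  congr 2 <;> omega

lemma Gz_pascal₁ (hx : ‖x‖ < 1) (hx0 : x ≠ 0) (m : ℕ) (k : ℤ) :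
    Gz x (m + 1) k = Gz x m k + x ^ ((m : ℤ) + 1 - k) * Gz x m (k - 1) := by
  rcases lt_trichotomy k 0 with hk | hk | hk
  · rw [Gz_of_neg _ hk, Gz_of_neg _ (by omega), Gz_of_neg _ (by omega), mul_zero, add_zero]
  · subst hk
    rw [Gz_zero hx, Gz_zero hx, Gz_of_neg _ (by omega), mul_zero, add_zero]
  rcases lt_trichotomy ((m : ℤ) + 1) k with hk2 | hk2 | hk2
  · rw [Gz_of_gt _ hk2, Gz_of_gt _ (by omega), Gz_of_gt _ (by omega), mul_zero, add_zero]
  · -- k = m + 1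
    rw [← hk2, show (m : ℤ) + 1 = ((m + 1 : ℕ) : ℤ) by push_cast; ring,
      Gz_self hx (m + 1), Gz_of_gt m (by push_cast; omega),
      show (((m + 1 : ℕ) : ℤ) - 1) = ((m : ℕ) : ℤ) by push_cast; ring, Gz_self hx m,
      show (((m + 1 : ℕ) : ℤ) - ((m + 1 : ℕ) : ℤ)) = 0 by ring]
    simp
  · -- 1 ≤ k ≤ m
    obtain ⟨a, rfl⟩ : ∃ a : ℕ, k = ((a + 1 : ℕ) : ℤ) := ⟨(k - 1).toNat, by omega⟩
    obtain ⟨c, rfl⟩ : ∃ c : ℕ, m = a + 1 + c := ⟨(m - a - 1 : ℕ), by omega⟩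
    rw [show (((a + 1 : ℕ) : ℤ) - 1) = ((a : ℕ) : ℤ) by push_cast; ring]
    rw [Gz_eq hx (by omega), Gz_eq hx (by omega), Gz_eq hx (by omega)]
    rw [show ((a + 1 + c : ℕ) : ℤ) + 1 - ((a + 1 : ℕ) : ℤ) = ((c + 1 : ℕ) : ℤ) by
      push_cast; ring, zpow_natCast]
    have e4 : a + 1 + c + 1 - (a + 1) = c + 1 := by omega
    have e5 : a + 1 + c - (a + 1) = c := by omega
    have e6 : a + 1 + c - a = c + 1 := by omega
    rw [e4, e5, e6]
    rw [show a + 1 + c + 1 = (a + 1 + c) + 1 by ring, Pp_succ, Pp_succ x c,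
      show a + 1 = a + 1 by rfl, Pp_succ x a]
    have n1 := Pp_ne_zero x hx (a + 1 + c)
    have n2 := Pp_ne_zero x hx a
    have n3 := Pp_ne_zero x hx c
    have f1 := Pp_factor_ne x hx a
    have f2 := Pp_factor_ne x hx c
    have f3 := Pp_factor_ne x hx (a + 1 + c)
    field_simp
    ring

lemma Gz_pascal₂ (hx : ‖x‖ < 1) (hx0 : x ≠ 0) (m : ℕ) (k : ℤ) :
    Gz x (m + 1) k = x ^ k * Gz x m k + Gz x m (k - 1) := by
  rcases lt_trichotomy k 0 with hk | hk | hk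
  · rw [Gz_of_neg _ hk, Gz_of_neg _ (by omega), Gz_of_neg _ (by omega), mul_zero, add_zero]
  · subst hk
    rw [Gz_zero hx, Gz_zero hx, Gz_of_neg _ (by omega), zpow_zero]
    simp
  rcases lt_trichotomy ((m : ℤ) + 1) k with hk2 | hk2 | hk2
  · rw [Gz_of_gt _ hk2, Gz_of_gt _ (by omega), Gz_of_gt _ (by omega), mul_zero, zero_add]
  · -- k = m + 1
    rw [← hk2, show (m : ℤ) + 1 = ((m + 1 : ℕ) : ℤ) by push_cast; ring,
      Gz_self hx (m + 1), Gz_of_gt m (by push_cast; omega),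
      show (((m + 1 : ℕ) : ℤ) - 1) = ((m : ℕ) : ℤ) by push_cast; ring, Gz_self hx m]
    simp
  · -- 1 ≤ k ≤ m
    obtain ⟨a, rfl⟩ : ∃ a : ℕ, k = ((a + 1 : ℕ) : ℤ) := ⟨(k - 1).toNat, by omega⟩
    obtain ⟨c, rfl⟩ : ∃ c : ℕ, m = a + 1 + c := ⟨(m - a - 1 : ℕ), by omega⟩
    rw [show (((a + 1 : ℕ) : ℤ) - 1) = ((a : ℕ) : ℤ) by push_cast; ring]
    rw [Gz_eq hx (by omega), Gz_eq hx (by omega), Gz_eq hx (by omega), zpow_natCast]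
    have e4 : a + 1 + c + 1 - (a + 1) = c + 1 := by omega
    have e5 : a + 1 + c - (a + 1) = c := by omega
    have e6 : a + 1 + c - a = c + 1 := by omega
    rw [e4, e5, e6]
    rw [show a + 1 + c + 1 = (a + 1 + c) + 1 by ring, Pp_succ, Pp_succ x c, Pp_succ x a]
    have n1 := Pp_ne_zero x hx (a + 1 + c)
    have n2 := Pp_ne_zero x hx a
    have n3 := Pp_ne_zero x hx c
    have f1 := Pp_factor_ne x hx a
    have f2 := Pp_factor_ne x hx c
    have f3 := Pp_factor_ne x hx (a + 1 + c)
    field_simp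
    ring

lemma Gz_double (hx : ‖x‖ < 1) (hx0 : x ≠ 0) (m : ℕ) (k : ℤ) :
    Gz x (m + 2) k = x ^ k * Gz x m k + (1 + x ^ ((m : ℤ) + 1)) * Gz x m (k - 1)
      + x ^ ((m : ℤ) + 2 - k) * Gz x m (k - 2) := by
  have h1 := Gz_pascal₁ hx hx0 (m + 1) k
  rw [Gz_pascal₂ hx hx0 m k, Gz_pascal₂ hx hx0 m (k - 1)] at h1
  rw [show ((m + 1 : ℕ) : ℤ) + 1 - k = (m : ℤ) + 2 - k by push_cast; ring] at h1
  rw [show k - 1 - 1 = k - 2 by ring] at h1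
  rw [show m + 2 = m + 1 + 1 from rfl, h1]
  have e : x ^ ((m : ℤ) + 2 - k) * x ^ (k - 1) = x ^ ((m : ℤ) + 1) := by
    rw [← zpow_add₀ hx0]; ring_nf
  linear_combination Gz x m (k - 1) * e

lemma Gz_norm_le (hx : ‖x‖ < 1) (m : ℕ) (k : ℤ) :
    ‖Gz x m k‖ ≤ Real.exp ((1 - ‖x‖)⁻¹) *
      (Real.exp ((1 - ‖x‖)⁻¹ * (1 - ‖x‖)⁻¹)) ^ 2 := by
  by_cases h : 0 ≤ k ∧ k ≤ m
  · rw [Gz, if_pos h, norm_div, norm_mul]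
    have inv1 : ∀ a : ℕ, (‖Pp x a‖)⁻¹ ≤ Real.exp ((1 - ‖x‖)⁻¹ * (1 - ‖x‖)⁻¹) := by
      intro a
      have hp : (0:ℝ) < ‖Pp x a‖ := norm_pos_iff.2 (Pp_ne_zero x hx _)
      calc (‖Pp x a‖)⁻¹ ≤ (Real.exp (-((1 - ‖x‖)⁻¹ * (1 - ‖x‖)⁻¹)))⁻¹ :=
          inv_anti₀ (Real.exp_pos _) (Pp_norm_ge x hx a)
        _ = Real.exp ((1 - ‖x‖)⁻¹ * (1 - ‖x‖)⁻¹) := by rw [Real.exp_neg, inv_inv]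
    have hpos1 : (0 : ℝ) < ‖Pp x k.toNat‖ := norm_pos_iff.2 (Pp_ne_zero x hx _)
    have hpos2 : (0 : ℝ) < ‖Pp x (m - k.toNat)‖ := norm_pos_iff.2 (Pp_ne_zero x hx _)
    rw [div_eq_mul_inv, mul_inv]
    calc ‖Pp x m‖ * ((‖Pp x k.toNat‖)⁻¹ * (‖Pp x (m - k.toNat)‖)⁻¹)
        ≤ Real.exp ((1 - ‖x‖)⁻¹) *
          (Real.exp ((1 - ‖x‖)⁻¹ * (1 - ‖x‖)⁻¹) * Real.exp ((1 - ‖x‖)⁻¹ * (1 - ‖x‖)⁻¹)) := by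
          apply mul_le_mul (Pp_norm_le x hx m)
          · exact mul_le_mul (inv1 _) (inv1 _) (by positivity) (Real.exp_pos _).le
          · positivity
          · positivity
      _ = _ := by ring
  · rw [Gz, if_neg h, norm_zero]
    positivity

lemma tendsto_Pp (hx : ‖x‖ < 1) :
    Tendsto (Pp x) atTop (𝓝 (∏' j : ℕ, (1 - x ^ (j + 1)))) := by
  have hm : Multipliable (fun j : ℕ => 1 - x ^ (j + 1)) := by
    have := multipliable_one_sub x x hx hx
    refine this.congr fun j => ?_
    rw [pow_succ']
  exact hm.hasProd.tendsto_prod_nat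

lemma tprod_Pp_ne (hx : ‖x‖ < 1) : (∏' j : ℕ, (1 - x ^ (j + 1))) ≠ 0 := by
  have := tprod_one_sub_ne x x hx hx
  rwa [show (fun n : ℕ => 1 - x * x ^ n) = (fun n : ℕ => 1 - x ^ (n + 1)) from
    funext fun n => by rw [pow_succ']] at this

lemma Gz_tendsto (hx : ‖x‖ < 1) (n : ℤ) :
    Tendsto (fun N : ℕ => Gz x (2 * N) (n + N)) atTop
      (𝓝 ((∏' j : ℕ, (1 - x ^ (j + 1)))⁻¹)) := by
  set L := ∏' j : ℕ, (1 - x ^ (j + 1)) with hL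
  have hP := tendsto_Pp hx
  have hA : Tendsto (fun N : ℕ => (n + N : ℤ).toNat) atTop atTop := by
    apply tendsto_atTop_atTop.2
    intro b
    exact ⟨b + n.natAbs, fun N hN => by omega⟩
  have hB : Tendsto (fun N : ℕ => ((N : ℤ) - n).toNat) atTop atTop := by
    apply tendsto_atTop_atTop.2
    intro b
    exact ⟨b + n.natAbs, fun N hN => by omega⟩
  have hC : Tendsto (fun N : ℕ => 2 * N) atTop atTop := by
    apply tendsto_atTop_atTop.2
    intro b
    exact ⟨b, fun N hN => by omega⟩
  have hLne : L ≠ 0 := tprod_Pp_ne hx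
  have key : Tendsto (fun N : ℕ =>
      Pp x (2 * N) / (Pp x ((n + N : ℤ).toNat) * Pp x (((N : ℤ) - n).toNat))) atTop
      (𝓝 (L / (L * L))) :=
    Tendsto.div ((hP.comp hC)) ((hP.comp hA).mul (hP.comp hB)) (mul_ne_zero hLne hLne)
  rw [show L / (L * L) = L⁻¹ by field_simp] at key
  apply key.congr'
  filter_upwards [eventually_ge_atTop n.natAbs] with N hN
  rw [Gz, if_pos (by omega)]
  have h2 : 2 * N - (n + (N : ℤ)).toNat = ((N : ℤ) - n).toNat := by omega
  rw [h2]

/-- The theta summand `(-1)^n q^{n²}`. -/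
noncomputable def W (q : ℂ) (n : ℤ) : ℂ := (-1 : ℂ) ^ n * q ^ (n ^ 2)

noncomputable def J (q : ℂ) (N : ℕ) : ℂ :=
  ∑ n ∈ Finset.Icc (-(N : ℤ)) (N : ℤ), W q n * Gz (q ^ 2) (2 * N) (n + N)

lemma sq_zpow {q : ℂ} (hq0 : q ≠ 0) (e : ℤ) : (q ^ 2) ^ e = q ^ (2 * e) := by
  rw [← zpow_natCast q 2, ← zpow_mul]
  norm_num

lemma W_up {q : ℂ} (hq0 : q ≠ 0) (N : ℕ) (n : ℤ) :
    W q n * (q ^ 2) ^ (n + (N : ℤ) + 1) = -(q ^ (2 * N + 1)) * W q (n + 1) := by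
  have hm : (-1 : ℂ) ≠ 0 := by norm_num
  rw [W, W, sq_zpow hq0, zpow_add₀ hm n 1, zpow_one]
  rw [show ((n + 1) ^ 2 : ℤ) = n ^ 2 + (2 * n + 1) by ring, zpow_add₀ hq0,
    show (2 * (n + (N : ℤ) + 1)) = (2 * n + 1) + ((2 * N + 1 : ℕ) : ℤ) by push_cast; ring,
    zpow_add₀ hq0, zpow_natCast]
  ring

lemma W_down {q : ℂ} (hq0 : q ≠ 0) (N : ℕ) (n : ℤ) :
    W q n * (q ^ 2) ^ ((N : ℤ) + 1 - n) = -(q ^ (2 * N + 1)) * W q (n - 1) := by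
  have hm : (-1 : ℂ) ≠ 0 := by norm_num
  rw [W, W, sq_zpow hq0, show n - 1 = n + (-1) by ring, zpow_add₀ hm n (-1)]
  rw [show ((n + (-1)) ^ 2 : ℤ) = n ^ 2 + (1 - 2 * n) by ring, zpow_add₀ hq0,
    show (2 * ((N : ℤ) + 1 - n)) = (1 - 2 * n) + ((2 * N + 1 : ℕ) : ℤ) by push_cast; ring,
    zpow_add₀ hq0, zpow_natCast, zpow_neg, zpow_one]
  field_simp

lemma J_zero (q : ℂ) (hq : ‖q‖ < 1) : J q 0 = 1 := by
  have hQ : ‖q ^ 2‖ < 1 := by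
    rw [norm_pow]
    exact pow_lt_one₀ (norm_nonneg q) hq (by norm_num)
  rw [J]
  simp only [Nat.cast_zero, neg_zero, Finset.Icc_self, Finset.sum_singleton, add_zero,
    mul_zero]
  rw [Gz_zero hQ, W]
  simp

lemma J_succ (q : ℂ) (hq : ‖q‖ < 1) (hq0 : q ≠ 0) (N : ℕ) :
    J q (N + 1) = (1 - q ^ (2 * N + 1)) ^ 2 * J q N := by
  have hQ : ‖q ^ 2‖ < 1 := by
    rw [norm_pow]; exact pow_lt_one₀ (norm_nonneg q) hq (by norm_num)
  have hQ0 : q ^ 2 ≠ 0 := pow_ne_zero _ hq0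
  have expand : ∀ n ∈ Finset.Icc (-(N + 1 : ℤ)) ((N : ℤ) + 1),
      W q n * Gz (q ^ 2) (2 * (N + 1)) (n + ((N : ℕ) + 1 : ℤ)) =
      W q n * (q ^ 2) ^ (n + (N : ℤ) + 1) * Gz (q ^ 2) (2 * N) (n + 1 + N)
      + (1 + q ^ (4 * N + 2)) * (W q n * Gz (q ^ 2) (2 * N) (n + N))
      + W q n * (q ^ 2) ^ ((N : ℤ) + 1 - n) * Gz (q ^ 2) (2 * N) (n - 1 + N) := by
    intro n _
    rw [show 2 * (N + 1) = 2 * N + 2 by ring, Gz_double hQ hQ0]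
    rw [show (n + ((N : ℕ) + 1 : ℤ)) = n + (N : ℤ) + 1 by push_cast; ring]
    rw [show (n + (N : ℤ) + 1 - 1) = n + N by ring,
      show (n + (N : ℤ) + 1 - 2) = n - 1 + N by ring,
      show ((2 * N : ℕ) : ℤ) + 2 - (n + (N : ℤ) + 1) = (N : ℤ) + 1 - n by push_cast; ring,
      show ((2 * N : ℕ) : ℤ) + 1 = ((2 * N + 1 : ℕ) : ℤ) by push_cast; ring,
      zpow_natCast,
      show ((q ^ 2) ^ (2 * N + 1) : ℂ) = q ^ (4 * N + 2) by rw [← pow_mul]; ring_nf,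
      show n + (N : ℤ) + 1 = n + 1 + N by ring]
    ring
  rw [J, show (-(N + 1 : ℕ) : ℤ) = -(N + 1 : ℤ) by push_cast; ring,
    show ((N + 1 : ℕ) : ℤ) = (N : ℤ) + 1 by push_cast; ring]
  rw [Finset.sum_congr rfl (fun n hn => expand n (by exact_mod_cast hn)),
    Finset.sum_add_distrib, Finset.sum_add_distrib]
  have hS2 : ∑ n ∈ Finset.Icc (-(N + 1 : ℤ)) ((N : ℤ) + 1),
      (1 + q ^ (4 * N + 2)) * (W q n * Gz (q ^ 2) (2 * N) (n + N)) =
      (1 + q ^ (4 * N + 2)) * J q N := by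
    rw [← Finset.mul_sum, J]
    congr 1
    apply (Finset.sum_subset (Finset.Icc_subset_Icc (by omega) (by omega)) ?_).symm
    intro n hn hn2
    simp only [Finset.mem_Icc] at hn hn2
    rcases lt_or_ge n (-(N : ℤ)) with h | h
    · rw [Gz_of_neg _ (by omega), mul_zero]
    · rw [Gz_of_gt _ (by push_cast; omega), mul_zero]
  have hS1 : ∑ n ∈ Finset.Icc (-(N + 1 : ℤ)) ((N : ℤ) + 1),
      W q n * (q ^ 2) ^ (n + (N : ℤ) + 1) * Gz (q ^ 2) (2 * N) (n + 1 + N) =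
      -(q ^ (2 * N + 1)) * J q N := by
    rw [J, Finset.mul_sum]
    rw [show Finset.Icc (-(N + 1 : ℤ)) ((N : ℤ) + 1) = Finset.Icc (-(N + 1 : ℤ)) ((N : ℤ) + 1) from rfl]
    rw [← Finset.sum_subset (Finset.Icc_subset_Icc (le_refl (-(N+1:ℤ))) (by omega :
        (N : ℤ) - 1 ≤ (N : ℤ) + 1)) ?_]
    · apply Finset.sum_equiv (Equiv.addRight (1 : ℤ))
      · intro n
        simp only [Finset.mem_Icc, Equiv.coe_addRight]
        omega
      · intro n hn
        simp only [Equiv.coe_addRight]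
        rw [W_up hq0]
        ring
    · intro n hn hn2
      simp only [Finset.mem_Icc] at hn hn2
      rw [Gz_of_gt _ (by push_cast; omega), mul_zero]
  have hS3 : ∑ n ∈ Finset.Icc (-(N + 1 : ℤ)) ((N : ℤ) + 1),
      W q n * (q ^ 2) ^ ((N : ℤ) + 1 - n) * Gz (q ^ 2) (2 * N) (n - 1 + N) =
      -(q ^ (2 * N + 1)) * J q N := by
    rw [J, Finset.mul_sum]
    rw [← Finset.sum_subset (Finset.Icc_subset_Icc (by omega : -(N + 1 : ℤ) ≤ 1 - (N : ℤ))
        (le_refl ((N : ℤ) + 1))) ?_]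
    · apply Finset.sum_equiv (Equiv.subRight (1 : ℤ))
      · intro n
        simp only [Finset.mem_Icc, Equiv.subRight_apply]
        omega
      · intro n hn
        simp only [Equiv.subRight_apply]
        rw [W_down hq0]
        ring
    · intro n hn hn2
      simp only [Finset.mem_Icc] at hn hn2
      rw [Gz_of_neg _ (by omega), mul_zero]
  rw [hS1, hS2, hS3]
  ring

lemma J_eq (q : ℂ) (hq : ‖q‖ < 1) (hq0 : q ≠ 0) (N : ℕ) :
    J q N = ∏ j ∈ Finset.range N, (1 - q ^ (2 * j + 1)) ^ 2 := by
  induction N with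
  | zero => simp [J_zero q hq]
  | succ n ih =>
      rw [J_succ q hq hq0 n, ih, Finset.prod_range_succ]
      ring


lemma natAbs_le_sq (n : ℤ) : n.natAbs ≤ n.natAbs ^ 2 := by
  rcases Nat.eq_zero_or_pos n.natAbs with h | h
  · simp [h]
  · calc n.natAbs = n.natAbs * 1 := (mul_one _).symm
      _ ≤ n.natAbs * n.natAbs := Nat.mul_le_mul_left _ h
      _ = n.natAbs ^ 2 := (sq _).symm

lemma W_norm_le (q : ℂ) (hq : ‖q‖ < 1) (n : ℤ) : ‖W q n‖ ≤ ‖q‖ ^ n.natAbs := by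
  rw [W, norm_mul, norm_zpow, norm_zpow, norm_neg, norm_one, one_zpow, one_mul]
  rw [show (n ^ 2 : ℤ) = ((n.natAbs ^ 2 : ℕ) : ℤ) by push_cast; exact (_root_.sq_abs n).symm,
    zpow_natCast]
  exact pow_le_pow_of_le_one (norm_nonneg q) hq.le (natAbs_le_sq n)

lemma gauss (q : ℂ) (hq : ‖q‖ < 1) (hq0 : q ≠ 0) :
    (∑' n : ℤ, W q n) =
      (∏' j : ℕ, (1 - q ^ (2 * j + 1))) ^ 2 * (∏' j : ℕ, (1 - (q ^ 2) ^ (j + 1))) := by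
  have hQ : ‖q ^ 2‖ < 1 := by
    rw [norm_pow]; exact pow_lt_one₀ (norm_nonneg q) hq (by norm_num)
  have hQ0 : q ^ 2 ≠ 0 := pow_ne_zero _ hq0
  set L := ∏' j : ℕ, (1 - (q ^ 2) ^ (j + 1)) with hLdef
  set M := ∏' j : ℕ, (1 - q ^ (2 * j + 1)) with hMdef
  have hLne : L ≠ 0 := tprod_Pp_ne hQ
  -- limit of J along the product formula
  have hmulM : Multipliable (fun j : ℕ => 1 - q ^ (2 * j + 1)) := by
    refine (multipliable_one_sub q (q ^ 2) hQ hq).congr fun j => ?_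
    rw [← pow_mul, ← pow_succ']
  have h1 : Tendsto (fun N => J q N) atTop (𝓝 (M ^ 2)) := by
    have t := hmulM.hasProd.tendsto_prod_nat
    have t2 : Tendsto (fun N => (∏ j ∈ Finset.range N, (1 - q ^ (2 * j + 1))) ^ 2)
        atTop (𝓝 (M ^ 2)) := t.pow 2
    refine t2.congr fun N => ?_
    rw [J_eq q hq hq0 N, ← Finset.prod_pow]
  -- limit of J via dominated convergence
  set E := Real.exp ((1 - ‖q ^ 2‖)⁻¹) * (Real.exp ((1 - ‖q ^ 2‖)⁻¹ * (1 - ‖q ^ 2‖)⁻¹)) ^ 2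
    with hEdef
  have hE0 : 0 ≤ E := by positivity
  set f : ℕ → ℤ → ℂ := fun N n =>
    if n ∈ Finset.Icc (-(N : ℤ)) (N : ℤ) then W q n * Gz (q ^ 2) (2 * N) (n + N) else 0
    with hfdef
  have hJf : ∀ N, (∑' n : ℤ, f N n) = J q N := by
    intro N
    rw [J, tsum_eq_sum (s := Finset.Icc (-(N : ℤ)) (N : ℤ)) (fun n hn => if_neg hn)]
    exact Finset.sum_congr rfl fun n hn => if_pos hn
  have hbdd : Summable (fun n : ℤ => E * ‖q‖ ^ n.natAbs) := by
    apply Summable.mul_left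
    apply Summable.of_nat_of_neg
    · refine (summable_geometric_of_lt_one (norm_nonneg q) hq).congr fun k => ?_
      simp
    · refine (summable_geometric_of_lt_one (norm_nonneg q) hq).congr fun k => ?_
      simp
  have h2 : Tendsto (fun N => J q N) atTop (𝓝 ((∑' n : ℤ, W q n) * L⁻¹)) := by
    have key : Tendsto (fun N => ∑' n : ℤ, f N n) atTop (𝓝 (∑' n : ℤ, W q n * L⁻¹)) := by
      apply tendsto_tsum_of_dominated_convergence hbdd
      · intro n
        have base : Tendsto (fun N : ℕ => W q n * Gz (q ^ 2) (2 * N) (n + N)) atTop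
            (𝓝 (W q n * (∏' j : ℕ, (1 - (q ^ 2) ^ (j + 1)))⁻¹)) :=
          Tendsto.const_mul (W q n) (Gz_tendsto hQ n)
        apply base.congr'
        filter_upwards [eventually_ge_atTop n.natAbs] with N hN
        rw [hfdef]
        simp only []
        rw [if_pos (by simp only [Finset.mem_Icc]; omega)]
      · apply Eventually.of_forall
        intro N n
        rw [hfdef]
        simp only []
        split_ifs with h
        · rw [norm_mul]
          calc ‖W q n‖ * ‖Gz (q ^ 2) (2 * N) (n + N)‖ ≤ ‖q‖ ^ n.natAbs * E :=
              mul_le_mul (W_norm_le q hq n) (Gz_norm_le hQ _ _) (norm_nonneg _)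
                (by positivity)
            _ = E * ‖q‖ ^ n.natAbs := by ring
        · rw [norm_zero]
          positivity
    rw [tsum_mul_right] at key
    exact key.congr fun N => hJf N
  have h3 := tendsto_nhds_unique h2 h1
  field_simp at h3
  exact h3.trans (mul_comm _ _)

end ThetaEtaAux

/-- The Dedekind eta function `η(τ) = e^{πiτ/12} ∏_{n≥1} (1 − e^{2πinτ})`. -/
noncomputable def eta (τ : ℂ) : ℂ :=
  Complex.exp (Real.pi * Complex.I * τ / 12) *
    ∏' n : ℕ, (1 - Complex.exp (2 * Real.pi * Complex.I * (n + 1) * τ))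

open ThetaEtaAux in
theorem thetaNull01_eq_eta_quotient (τ : ℂ) (hτ : 0 < τ.im) :
    (∑' n : ℤ, (-1 : ℂ) ^ n * Complex.exp (Real.pi * Complex.I * τ * n ^ 2))
      = eta (τ / 2) ^ 2 / eta τ := by
  set q : ℂ := Complex.exp (Real.pi * Complex.I * τ) with hqdef
  have hre : (↑Real.pi * Complex.I * τ).re = -(Real.pi * τ.im) := by
    simp [Complex.mul_re, Complex.mul_im]
  have hq : ‖q‖ < 1 := by
    rw [hqdef, Complex.norm_exp, hre]
    apply Real.exp_lt_one_iff.mpr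
    have := Real.pi_pos
    nlinarith
  have hq0 : q ≠ 0 := Complex.exp_ne_zero _
  have hQ : ‖q ^ 2‖ < 1 := by
    rw [norm_pow]; exact pow_lt_one₀ (norm_nonneg q) hq (by norm_num)
  have hQ0 : q ^ 2 ≠ 0 := pow_ne_zero _ hq0
  -- the left side is `∑' n, W q n`
  have hLHS : (∑' n : ℤ, (-1 : ℂ) ^ n * Complex.exp (Real.pi * Complex.I * τ * n ^ 2))
      = ∑' n : ℤ, W q n := by
    apply tsum_congr
    intro n
    rw [W, hqdef, ← Complex.exp_int_mul]
    congr 2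
    push_cast
    ring
  -- the products
  set M := ∏' j : ℕ, (1 - q ^ (2 * j + 1)) with hMdef
  set L := ∏' j : ℕ, (1 - (q ^ 2) ^ (j + 1)) with hLdef
  have hLne : L ≠ 0 := tprod_Pp_ne hQ
  have hmulM : Multipliable (fun j : ℕ => 1 - q ^ (2 * j + 1)) := by
    refine (multipliable_one_sub q (q ^ 2) hQ hq).congr fun j => ?_
    rw [← pow_mul, ← pow_succ']
  have hmulL : Multipliable (fun j : ℕ => 1 - (q ^ 2) ^ (j + 1)) := by
    refine (multipliable_one_sub (q ^ 2) (q ^ 2) hQ hQ).congr fun j => ?_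
    rw [← pow_succ']
  -- eta τ = exp(πiτ/12) * L
  have hetaτ : eta τ = Complex.exp (Real.pi * Complex.I * τ / 12) * L := by
    rw [eta, hLdef]
    congr 1
    apply tprod_congr
    intro n
    congr 1
    rw [← pow_mul, hqdef, ← Complex.exp_nat_mul]
    congr 1
    push_cast
    ring
  -- eta (τ/2) = exp(πiτ/24) * (M * L)
  have hsplit : (∏' n : ℕ, (1 - q ^ (n + 1))) = M * L := by
    rw [hMdef, hLdef]
    have h := tprod_even_mul_odd (f := fun k : ℕ => 1 - q ^ (k + 1))
      (by refine hmulM.congr fun j => ?_; ring_nf)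
      (by refine hmulL.congr fun j => ?_; rw [← pow_mul]; ring_nf)
    rw [← h]
    congr 1
    apply tprod_congr; intro j; rw [← pow_mul]; ring_nf
  have hetaτ2 : eta (τ / 2) = Complex.exp (Real.pi * Complex.I * τ / 24) * (M * L) := by
    rw [eta, ← hsplit]
    congr 1
    · congr 1; ring
    · apply tprod_congr
      intro n
      congr 1
      rw [hqdef, ← Complex.exp_nat_mul]
      congr 1
      push_cast
      ring
  rw [hLHS, gauss q hq hq0, hetaτ, hetaτ2]
  have hc : Complex.exp (Real.pi * Complex.I * τ / 24) ^ 2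
      = Complex.exp (Real.pi * Complex.I * τ / 12) := by
    rw [← Complex.exp_nat_mul]
    congr 1
    push_cast
    ring
  have hcne : Complex.exp (Real.pi * Complex.I * τ / 12) ≠ 0 := Complex.exp_ne_zero _
  rw [← hMdef, ← hLdef, eq_div_iff (mul_ne_zero hcne hLne), mul_pow, hc]
  ring
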